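/- Let G be a graph and k ≥ 1. There exist k 2-star-packings of G whose union covers every vertex if and only if |S| ≤ 2k·|N(S)| for every stable set S of G. -/

import Mathlib

/-- `M` is a matching of `G`: a set of edges of `G` that are pairwise vertex-disjoint. -/
def IsMatching {V : Type*} (G : SimpleGraph V) (M : Finset (Sym2 V)) : Prop :=
  ↑M ⊆ G.edgeSet ∧ (M : Set (Sym2 V)).Pairwise fun e f => ∀ v : V, ¬(v ∈ e ∧ v ∈ f)

/-- A vertex `v` is covered by an edge set `F` if some edge of `F` is incident to it. -/
def Covers {V : Type*} (F : Finset (Sym2 V)) (v : V) : Prop := ∃ e ∈ F, v ∈ e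

instance {V : Type*} [DecidableEq V] (F : Finset (Sym2 V)) (v : V) : Decidable (Covers F v) :=
  inferInstanceAs (Decidable (∃ e ∈ F, v ∈ e))

/-- A stable (independent) set of vertices. -/
def IsStable {V : Type*} (G : SimpleGraph V) (S : Finset V) : Prop :=
  ∀ u ∈ S, ∀ v ∈ S, ¬ G.Adj u v

/-- The external neighborhood `N(S)`. -/
def nbr {V : Type*} [Fintype V] [DecidableEq V] (G : SimpleGraph V) [DecidableRel G.Adj]
    (S : Finset V) : Finset V :=
  Finset.univ.filter fun w => w ∉ S ∧ ∃ u ∈ S, G.Adj u w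

/-- degree of a vertex in an edge set -/
def degF {V : Type*} [DecidableEq V] (F : Finset (Sym2 V)) (v : V) : ℕ :=
  (F.filter fun e => v ∈ e).card

/-- `F` is a 2-star-packing: each component is a star with 1 or 2 edges.
Equivalently all degrees are at most 2 and no edge joins two vertices of degree 2. -/
def Is2StarPacking {V : Type*} [DecidableEq V] (G : SimpleGraph V) (F : Finset (Sym2 V)) : Prop :=
  ↑F ⊆ G.edgeSet ∧ (∀ v : V, degF F v ≤ 2) ∧
    ∀ e ∈ F, ∀ u v : V, e = s(u, v) → degF F u = 1 ∨ degF F v = 1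

open Finset

section StarPackingProof

variable {V : Type*} [Fintype V] [DecidableEq V]


/-- vertices covered by the partial star forest -/
def sfCovered (C : Finset V) (ℓ : V → Finset V) : Finset V := C ∪ C.biUnion ℓ

/-- uncovered vertices -/
def sfU (C : Finset V) (ℓ : V → Finset V) : Finset V := univ \ sfCovered C ℓ

lemma mem_sfU {C : Finset V} {ℓ : V → Finset V} {v : V} :
    v ∈ sfU C ℓ ↔ v ∉ C ∧ ∀ c ∈ C, v ∉ ℓ c := by
  simp only [sfU, sfCovered, mem_sdiff, mem_univ, true_and, mem_union, mem_biUnion]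
  push_neg
  rfl

/-- invariants of the partial star forest construction -/
def StarInv {V : Type*} [Fintype V] [DecidableEq V] (G : SimpleGraph V) (f : V → V) (d : ℕ)
    (C : Finset V) (ℓ : V → Finset V) : Prop :=
  (∀ c ∈ C, (ℓ c).Nonempty) ∧
  (∀ c ∈ C, ∀ v ∈ ℓ c, G.Adj c v) ∧
  (∀ c ∈ C, (ℓ c ∪ (sfU C ℓ).filter (fun v => f v = c)).card ≤ d) ∧
  (∀ c ∈ C, ∀ v ∈ ℓ c, v ∉ C) ∧
  (∀ c ∈ C, ∀ c' ∈ C, c ≠ c' → ∀ v ∈ ℓ c, v ∉ ℓ c') ∧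
  (∀ u ∈ sfU C ℓ, f u ∈ sfU C ℓ ∨ f u ∈ C)

section step
variable {G : SimpleGraph V} {f : V → V} {d : ℕ} {C : Finset V} {ℓ : V → Finset V}

/-- adding a new star with center `y` and leaves `L` -/
lemma step_center (inv : StarInv G f d C ℓ) {y : V} {L : Finset V}
    (hyU : y ∈ sfU C ℓ) (hLU : ∀ v ∈ L, v ∈ sfU C ℓ) (hLne : L.Nonempty) (hyL : y ∉ L)
    (hadj : ∀ v ∈ L, G.Adj y v)
    (hcap : (L ∪ ((sfU C ℓ \ insert y L).filter (fun v => f v = y))).card ≤ d)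
    (hptr : ∀ v ∈ sfU C ℓ, v ∉ insert y L → f v ∉ L) :
    StarInv G f d (insert y C) (Function.update ℓ y L) ∧
      sfU (insert y C) (Function.update ℓ y L) = sfU C ℓ \ insert y L := by
  obtain ⟨inv1, inv2, inv3, inv4, inv5, inv6⟩ := inv
  have hyC : y ∉ C := (mem_sfU.mp hyU).1
  have hLeq : ∀ c ∈ C, Function.update ℓ y L c = ℓ c := by
    intro c hc
    apply Function.update_of_ne
    intro h; rw [h] at hc; exact hyC hc
  have hmemC : ∀ c, c ∈ insert y C → c = y ∨ (c ∈ C ∧ c ≠ y) := by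
    intro c hc
    rcases mem_insert.mp hc with h | h
    · exact Or.inl h
    · exact Or.inr ⟨h, fun hcy => hyC (hcy ▸ h)⟩
  have hUeq : sfU (insert y C) (Function.update ℓ y L) = sfU C ℓ \ insert y L := by
    ext v
    rw [mem_sdiff, mem_sfU, mem_sfU]
    constructor
    · rintro ⟨h1, h2⟩
      have hvy : v ≠ y := fun h => h1 (by rw [h]; exact mem_insert_self _ _)
      have hvC : v ∉ C := fun h => h1 (mem_insert_of_mem h)
      have hvL : v ∉ L := by
        have := h2 y (mem_insert_self _ _)
        rwa [Function.update_self] at this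
      refine ⟨⟨hvC, fun c hc => ?_⟩, by simp [hvy, hvL]⟩
      have := h2 c (mem_insert_of_mem hc)
      rwa [hLeq c hc] at this
    · rintro ⟨⟨hvC, hvℓ⟩, hvyL⟩
      simp only [mem_insert, not_or] at hvyL
      refine ⟨?_, ?_⟩
      · intro h
        rcases mem_insert.mp h with h | h
        · exact hvyL.1 h
        · exact hvC h
      · intro c hc
        rcases hmemC c hc with h | ⟨h, _⟩
        · subst h; rw [Function.update_self]; exact hvyL.2
        · rw [hLeq c h]; exact hvℓ c h
  refine ⟨⟨?_, ?_, ?_, ?_, ?_, ?_⟩, hUeq⟩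
  · intro c hc
    rcases hmemC c hc with h | ⟨h, _⟩
    · subst h; rw [Function.update_self]; exact hLne
    · rw [hLeq c h]; exact inv1 c h
  · intro c hc v hv
    rcases hmemC c hc with h | ⟨h, _⟩
    · subst h; rw [Function.update_self] at hv; exact hadj v hv
    · rw [hLeq c h] at hv; exact inv2 c h v hv
  · intro c hc
    rcases hmemC c hc with h | ⟨h, _⟩
    · subst h
      rw [Function.update_self, hUeq]
      exact le_trans (card_le_card (by intro x; simp only [mem_union, mem_filter]; tauto)) hcap
    · rw [hLeq c h, hUeq]
      refine le_trans (card_le_card ?_) (inv3 c h)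
      intro x
      simp only [mem_union, mem_filter, mem_sdiff]
      tauto
  · intro c hc v hv
    rcases hmemC c hc with h | ⟨h, _⟩
    · subst h
      rw [Function.update_self] at hv
      have hvU := mem_sfU.mp (hLU v hv)
      intro hvmem
      rcases mem_insert.mp hvmem with h' | h'
      · rw [h'] at hv; exact hyL hv
      · exact hvU.1 h'
    · rw [hLeq c h] at hv
      intro hvmem
      rcases mem_insert.mp hvmem with h' | h'
      · rw [h'] at hv; exact (mem_sfU.mp hyU).2 c h hv
      · exact inv4 c h v hv h'
  · intro c hc c' hc' hne v hv
    rcases hmemC c hc with h | ⟨h, hcy⟩ <;> rcases hmemC c' hc' with h' | ⟨h', hcy'⟩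
    · exact absurd (h.trans h'.symm) hne
    · subst h
      rw [Function.update_self] at hv
      rw [hLeq c' h']
      exact (mem_sfU.mp (hLU v hv)).2 c' h'
    · subst h'
      rw [hLeq c h] at hv
      rw [Function.update_self]
      intro hvL
      exact (mem_sfU.mp (hLU v hvL)).2 c h hv
    · rw [hLeq c h] at hv
      rw [hLeq c' h']
      exact inv5 c h c' h' hne v hv
  · intro u hu
    rw [hUeq] at hu ⊢
    obtain ⟨huU, huyL⟩ := mem_sdiff.mp hu
    rcases inv6 u huU with h | h
    · by_cases hfy : f u = y
      · exact Or.inr (by rw [hfy]; exact mem_insert_self y C)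
      · have hfL : f u ∉ L := hptr u huU huyL
        exact Or.inl (mem_sdiff.mpr ⟨h, by simp [hfy, hfL]⟩)
    · exact Or.inr (mem_insert_of_mem h)
end step

section step2
variable {G : SimpleGraph V} {f : V → V} {d : ℕ} {C : Finset V} {ℓ : V → Finset V}

/-- attaching an uncovered vertex `u` to the existing center `f u` -/
lemma step_attach (inv : StarInv G f d C ℓ) (hadjf : ∀ v, G.Adj v (f v)) {u : V}
    (hu : u ∈ sfU C ℓ) (hc : f u ∈ C)
    (hnofib : ∀ v ∈ sfU C ℓ, f v ≠ u) :
    StarInv G f d C (Function.update ℓ (f u) (insert u (ℓ (f u)))) ∧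
      sfU C (Function.update ℓ (f u) (insert u (ℓ (f u)))) = sfU C ℓ \ {u} := by
  obtain ⟨inv1, inv2, inv3, inv4, inv5, inv6⟩ := inv
  set c₀ := f u with hc₀
  set ℓ' := Function.update ℓ c₀ (insert u (ℓ c₀)) with hℓ'
  have hval : ∀ c, c ∈ C → (c = c₀ → ℓ' c = insert u (ℓ c₀)) ∧ (c ≠ c₀ → ℓ' c = ℓ c) := by
    intro c _
    constructor
    · intro h; subst h; rw [hℓ', Function.update_self]
    · intro h; rw [hℓ', Function.update_of_ne h]
  have hsub : ∀ c ∈ C, ℓ c ⊆ ℓ' c := by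
    intro c hc' x hx
    by_cases h : c = c₀
    · rw [((hval c hc').1 h), ← h]; exact mem_insert_of_mem hx
    · rw [(hval c hc').2 h]; exact hx
  have huℓ : ∀ c ∈ C, u ∉ ℓ c := (mem_sfU.mp hu).2
  have hu_mem' : ∀ c ∈ C, ∀ x, x ∈ ℓ' c → x = u ∧ c = c₀ ∨ x ∈ ℓ c := by
    intro c hcmem x hx
    by_cases h : c = c₀
    · rw [(hval c hcmem).1 h] at hx
      rcases mem_insert.mp hx with h' | h'
      · exact Or.inl ⟨h', h⟩
      · rw [h]; exact Or.inr h'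
    · rw [(hval c hcmem).2 h] at hx; exact Or.inr hx
  have hUeq : sfU C ℓ' = sfU C ℓ \ {u} := by
    ext v
    rw [mem_sdiff, mem_sfU, mem_sfU, mem_singleton]
    constructor
    · rintro ⟨h1, h2⟩
      have hvu : v ≠ u := by
        intro h; subst h
        exact h2 c₀ hc (by rw [(hval c₀ hc).1 rfl]; exact mem_insert_self _ _)
      exact ⟨⟨h1, fun c hcm hvℓ => h2 c hcm (hsub c hcm hvℓ)⟩, hvu⟩
    · rintro ⟨⟨h1, h2⟩, hvu⟩
      refine ⟨h1, fun c hcm hvℓ => ?_⟩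
      rcases hu_mem' c hcm v hvℓ with ⟨h', _⟩ | h'
      · exact hvu h'
      · exact h2 c hcm h'
  refine ⟨⟨?_, ?_, ?_, ?_, ?_, ?_⟩, hUeq⟩
  · intro c hcm
    exact (inv1 c hcm).mono (hsub c hcm)
  · intro c hcm v hv
    rcases hu_mem' c hcm v hv with ⟨rfl, rfl⟩ | h'
    · exact (hadjf v).symm
    · exact inv2 c hcm v h'
  · intro c hcm
    rw [hUeq]
    by_cases h : c = c₀
    · subst h
      rw [(hval c₀ hcm).1 rfl]
      refine le_trans (card_le_card ?_) (inv3 c₀ hcm)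
      intro x hx
      simp only [mem_union, mem_insert, mem_filter, mem_sdiff, mem_singleton] at hx
      rcases hx with (hxu | hx) | ⟨⟨hx1, _⟩, hx2⟩
      · rw [hxu]; exact mem_union.mpr (Or.inr (mem_filter.mpr ⟨hu, hc₀.symm⟩))
      · exact mem_union.mpr (Or.inl hx)
      · exact mem_union.mpr (Or.inr (mem_filter.mpr ⟨hx1, hx2⟩))
    · rw [(hval c hcm).2 h]
      refine le_trans (card_le_card ?_) (inv3 c hcm)
      intro x hx
      simp only [mem_union, mem_filter, mem_sdiff, mem_singleton] at hx
      rcases hx with hx | ⟨⟨hx1, _⟩, hx2⟩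
      · exact mem_union.mpr (Or.inl hx)
      · exact mem_union.mpr (Or.inr (mem_filter.mpr ⟨hx1, hx2⟩))
  · intro c hcm v hv
    rcases hu_mem' c hcm v hv with ⟨rfl, _⟩ | h'
    · exact (mem_sfU.mp hu).1
    · exact inv4 c hcm v h'
  · intro c hcm c' hcm' hne v hv
    intro hv'
    rcases hu_mem' c hcm v hv with ⟨rfl, rfl⟩ | h'
    · rcases hu_mem' c' hcm' v hv' with ⟨_, h2⟩ | h2
      · exact hne h2.symm
      · exact huℓ c' hcm' h2
    · rcases hu_mem' c' hcm' v hv' with ⟨rfl, rfl⟩ | h2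
      · exact huℓ c hcm h'
      · exact inv5 c hcm c' hcm' hne v h' h2
  · intro v hv
    rw [hUeq] at hv ⊢
    obtain ⟨hvU, hvu⟩ := mem_sdiff.mp hv
    rw [mem_singleton] at hvu
    rcases inv6 v hvU with h | h
    · refine Or.inl (mem_sdiff.mpr ⟨h, ?_⟩)
      rw [mem_singleton]
      exact hnofib v hvU
    · exact Or.inr h
end step2

/-- the final star forest properties -/
def StarForest (G : SimpleGraph V) (d : ℕ) (C : Finset V) (ℓ : V → Finset V) : Prop :=
  (∀ c ∈ C, (ℓ c).Nonempty) ∧ (∀ c ∈ C, (ℓ c).card ≤ d) ∧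
  (∀ c ∈ C, ∀ v ∈ ℓ c, G.Adj c v) ∧ (∀ c ∈ C, ∀ v ∈ ℓ c, v ∉ C) ∧
  (∀ c ∈ C, ∀ c' ∈ C, c ≠ c' → ∀ v ∈ ℓ c, v ∉ ℓ c') ∧
  (∀ v : V, v ∈ C ∨ ∃ c ∈ C, v ∈ ℓ c)

lemma sf_finish {G : SimpleGraph V} {f : V → V} {d : ℕ} {C : Finset V} {ℓ : V → Finset V}
    (inv : StarInv G f d C ℓ) (hU : sfU C ℓ = ∅) : StarForest G d C ℓ := by
  obtain ⟨inv1, inv2, inv3, inv4, inv5, _⟩ := inv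
  refine ⟨inv1, ?_, inv2, inv4, inv5, ?_⟩
  · intro c hc
    exact le_trans (card_le_card subset_union_left) (inv3 c hc)
  · intro v
    by_contra h
    push_neg at h
    have : v ∈ sfU C ℓ := mem_sfU.mpr ⟨h.1, fun c hc hv => h.2 c hc hv⟩
    rw [hU] at this
    exact absurd this (notMem_empty v)

lemma sf_aux {G : SimpleGraph V} {f : V → V} {d : ℕ}
    (hadjf : ∀ v, G.Adj v (f v)) (hd : 2 ≤ d)
    (hfib : ∀ w : V, (univ.filter (fun v => f v = w)).card ≤ d) :
    ∀ (n : ℕ) (C : Finset V) (ℓ : V → Finset V), StarInv G f d C ℓ → (sfU C ℓ).card ≤ n →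
      ∃ C' ℓ', StarForest G d C' ℓ' := by
  intro n
  induction n with
  | zero =>
    intro C ℓ inv hcard
    exact ⟨C, ℓ, sf_finish inv (card_eq_zero.mp (Nat.le_zero.mp hcard))⟩
  | succ n ih =>
    intro C ℓ inv hcard
    by_cases hUe : sfU C ℓ = ∅
    · exact ⟨C, ℓ, sf_finish inv hUe⟩
    set U := sfU C ℓ with hUdef
    by_cases hA : ∃ u ∈ U, ∀ v ∈ U, f v ≠ u
    · obtain ⟨u, huU, hufib⟩ := hA
      have hne : u ≠ f u := (hadjf u).ne
      rcases inv.2.2.2.2.2 u huU with hfu | hfc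
      · -- f u is uncovered: new star with center f u and single leaf u
        obtain ⟨inv', hU'⟩ := step_center (y := f u) (L := {u}) inv hfu
          (by intro v hv; rw [mem_singleton] at hv; rwa [hv])
          ⟨u, mem_singleton_self u⟩
          (by rw [mem_singleton]; exact fun h => hne h.symm)
          (by intro v hv; rw [mem_singleton] at hv; rw [hv]; exact (hadjf u).symm)
          (by
            rw [← hUdef]
            refine le_trans (card_le_card ?_) (hfib (f u))
            intro x hx
            rcases mem_union.mp hx with hx | hx
            · rw [mem_singleton] at hx
              rw [hx]
              exact mem_filter.mpr ⟨mem_univ u, rfl⟩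
            · exact mem_filter.mpr ⟨mem_univ x, (mem_filter.mp hx).2⟩)
          (by
            rw [← hUdef]
            intro v hv _
            rw [mem_singleton]
            exact hufib v hv)
        apply ih _ _ inv'
        rw [hU', ← hUdef]
        have h1 : U \ insert (f u) {u} ⊆ U.erase u := by
          intro x hx
          rw [mem_erase]
          obtain ⟨hx1, hx2⟩ := mem_sdiff.mp hx
          simp only [mem_insert, mem_singleton, not_or] at hx2
          exact ⟨hx2.2, hx1⟩
        have h2 := card_le_card h1
        rw [card_erase_of_mem huU] at h2
        have h3 : 1 ≤ U.card := card_pos.mpr (nonempty_of_ne_empty hUe)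
        omega
      · -- f u is a center: attach u to it
        obtain ⟨inv', hU'⟩ := step_attach inv hadjf huU hfc hufib
        apply ih _ _ inv'
        rw [hU', ← hUdef]
        have h2 := card_le_card (sdiff_subset.trans (subset_refl U) : U \ {u} ⊆ U)
        have h1 : U \ {u} ⊆ U.erase u := by
          intro x hx
          rw [mem_erase]
          obtain ⟨hx1, hx2⟩ := mem_sdiff.mp hx
          rw [mem_singleton] at hx2
          exact ⟨hx2, hx1⟩
        have h2 := card_le_card h1
        rw [card_erase_of_mem huU] at h2
        have h3 : 1 ≤ U.card := card_pos.mpr (nonempty_of_ne_empty hUe)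
        omega
    · -- Case B: every uncovered vertex has an uncovered preimage
      push_neg at hA
      have hA' : ∀ u ∈ U, ∃ v ∈ U, f v = u := hA
      -- counting: f maps U into U bijectively
      have hdisj : ∀ x ∈ U, ∀ y ∈ U, x ≠ y →
          Disjoint (U.filter (fun v => f v = x)) (U.filter (fun v => f v = y)) := by
        intro x _ y _ hxy
        rw [disjoint_left]
        intro a ha hay
        exact hxy ((mem_filter.mp ha).2.symm.trans (mem_filter.mp hay).2)
      have hbi : U.biUnion (fun u => U.filter (fun v => f v = u)) =
          U.filter (fun v => f v ∈ U) := by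
        ext v
        simp only [mem_biUnion, mem_filter]
        constructor
        · rintro ⟨u, hu, hv, rfl⟩; exact ⟨hv, hu⟩
        · rintro ⟨hv, hfv⟩; exact ⟨f v, hfv, hv, rfl⟩
      have hcardbi := Finset.card_biUnion hdisj
      rw [hbi] at hcardbi
      have hge : U.card ≤ ∑ u ∈ U, (U.filter (fun v => f v = u)).card := by
        calc U.card = ∑ _u ∈ U, 1 := by simp
          _ ≤ _ := by
            apply Finset.sum_le_sum
            intro u hu
            obtain ⟨v, hv, hfv⟩ := hA' u hu
            exact card_pos.mpr ⟨v, mem_filter.mpr ⟨hv, hfv⟩⟩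
      have hle : (U.filter (fun v => f v ∈ U)).card ≤ U.card := card_le_card (filter_subset _ _)
      have hsum_eq : ∑ u ∈ U, (U.filter (fun v => f v = u)).card = U.card := by omega
      have hfe : U.card ≤ (U.filter (fun v => f v ∈ U)).card := by omega
      have hfilter_eq : U.filter (fun v => f v ∈ U) = U :=
        Finset.eq_of_subset_of_card_le (filter_subset _ _) hfe
      have hfU : ∀ v ∈ U, f v ∈ U := by
        intro v hv
        rw [← hfilter_eq] at hv
        exact (mem_filter.mp hv).2
      have hone : ∀ u ∈ U, (U.filter (fun v => f v = u)).card = 1 := by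
        have hle1 : ∀ u ∈ U, (1 : ℕ) ≤ (U.filter (fun v => f v = u)).card := by
          intro u hu
          obtain ⟨v, hv, hfv⟩ := hA' u hu
          exact card_pos.mpr ⟨v, mem_filter.mpr ⟨hv, hfv⟩⟩
        have heq : ∑ _u ∈ U, (1 : ℕ) = ∑ u ∈ U, (U.filter (fun v => f v = u)).card := by
          rw [hsum_eq]; simp
        have := (Finset.sum_eq_sum_iff_of_le (s := U) (f := fun _ => (1 : ℕ))
          (g := fun u => (U.filter (fun v => f v = u)).card) hle1).mp heq
        intro u hu
        exact (this u hu).symm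
      obtain ⟨u₀, hu₀⟩ := nonempty_of_ne_empty hUe
      set w := f u₀ with hw
      have hwU : w ∈ U := hfU u₀ hu₀
      have hne : u₀ ≠ w := (hadjf u₀).ne
      have hfibw : U.filter (fun v => f v = w) = {u₀} := by
        obtain ⟨x, hx⟩ := card_eq_one.mp (hone w hwU)
        have : u₀ ∈ U.filter (fun v => f v = w) := mem_filter.mpr ⟨hu₀, rfl⟩
        rw [hx] at this
        rw [hx, mem_singleton.mp this]
      obtain ⟨inv', hU'⟩ := step_center (y := u₀) (L := {w}) inv hu₀
        (by intro v hv; rw [mem_singleton] at hv; rwa [hv])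
        ⟨w, mem_singleton_self w⟩
        (by rw [mem_singleton]; exact hne)
        (by intro v hv; rw [mem_singleton] at hv; rw [hv]; exact hadjf u₀)
        (by
          rw [← hUdef]
          refine le_trans (card_union_le _ _) ?_
          have : ((U \ insert u₀ {w}).filter (fun v => f v = u₀)).card ≤
              (U.filter (fun v => f v = u₀)).card := by
            apply card_le_card
            intro x hx
            exact mem_filter.mpr ⟨(mem_sdiff.mp (mem_filter.mp hx).1).1, (mem_filter.mp hx).2⟩
          have h1 := hone u₀ hu₀
          simp only [card_singleton]
          omega)
        (by
          rw [← hUdef]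
          intro v hv hvni
          rw [mem_singleton]
          intro hfvw
          have : v ∈ U.filter (fun x => f x = w) := mem_filter.mpr ⟨hv, hfvw⟩
          rw [hfibw, mem_singleton] at this
          subst this
          exact hvni (mem_insert_self _ _))
      apply ih _ _ inv'
      rw [hU', ← hUdef]
      have h1 : U \ insert u₀ {w} ⊆ U.erase u₀ := by
        intro x hx
        rw [mem_erase]
        obtain ⟨hx1, hx2⟩ := mem_sdiff.mp hx
        simp only [mem_insert, mem_singleton, not_or] at hx2
        exact ⟨hx2.1, hx1⟩
      have h2 := card_le_card h1
      rw [card_erase_of_mem hu₀] at h2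
      have h3 : 1 ≤ U.card := card_pos.mpr (nonempty_of_ne_empty hUe)
      omega

/-- main construction: a spanning star forest with stars of between 1 and d edges -/
lemma exists_star_forest {G : SimpleGraph V} {f : V → V} {d : ℕ}
    (hadjf : ∀ v, G.Adj v (f v)) (hd : 2 ≤ d)
    (hfib : ∀ w : V, (univ.filter (fun v => f v = w)).card ≤ d) :
    ∃ C ℓ, StarForest G d C ℓ := by
  apply sf_aux hadjf hd hfib (sfU (∅ : Finset V) (fun _ => ∅)).card ∅ (fun _ => ∅) ?_ le_rfl
  refine ⟨?_, ?_, ?_, ?_, ?_, ?_⟩ <;> simp [StarInv, sfU, sfCovered, mem_sfU]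

lemma packing_of_star_forest {G : SimpleGraph V} {k : ℕ} {C : Finset V} {ℓ : V → Finset V}
    (hsf : StarForest G (2 * k) C ℓ) :
    ∃ H : Fin k → Finset (Sym2 V),
      (∀ i, Is2StarPacking G (H i)) ∧ ∀ v : V, ∃ i, Covers (H i) v := by
  classical
  obtain ⟨F1, F2, F3, F4, F5, F6⟩ := hsf
  set rk : V → ℕ := fun v => ((Fintype.equivFin V) v : ℕ) with hrk
  have rkinj : Function.Injective rk := by
    intro a b h
    exact (Fintype.equivFin V).injective (Fin.val_injective h)
  set r : V → V → ℕ := fun c v => ((ℓ c).filter (fun w => rk w < rk v)).card with hr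
  have hrlt : ∀ c, ∀ v ∈ ℓ c, r c v < (ℓ c).card := by
    intro c v hv
    apply card_lt_card
    refine ⟨filter_subset _ _, fun hss => ?_⟩
    have := mem_filter.mp (hss hv)
    omega
  have hmono : ∀ c, ∀ v ∈ ℓ c, ∀ w ∈ ℓ c, rk v < rk w → r c v < r c w := by
    intro c v hv w hw hlt
    apply card_lt_card
    refine ⟨fun x hx => ?_, fun hss => ?_⟩
    · obtain ⟨hx1, hx2⟩ := mem_filter.mp hx
      exact mem_filter.mpr ⟨hx1, hx2.trans hlt⟩
    · have h1 : v ∈ (ℓ c).filter (fun x => rk x < rk w) := mem_filter.mpr ⟨hv, hlt⟩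
      have := mem_filter.mp (hss h1)
      omega
  have hrinj : ∀ c, ∀ v ∈ ℓ c, ∀ w ∈ ℓ c, r c v = r c w → v = w := by
    intro c v hv w hw hrw
    by_contra hne
    rcases lt_trichotomy (rk v) (rk w) with h | h | h
    · have := hmono c v hv w hw h; omega
    · exact hne (rkinj h)
    · have := hmono c w hw v hv h; omega
  set T : V → ℕ → Finset V := fun c i => (ℓ c).filter (fun v => r c v / 2 = i) with hT
  have hT2 : ∀ c, ∀ i : ℕ, (T c i).card ≤ 2 := by
    intro c i
    have : (T c i).card ≤ ({2 * i, 2 * i + 1} : Finset ℕ).card := by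
      apply card_le_card_of_injOn (fun v => r c v)
      · intro v hv
        obtain ⟨_, hv2⟩ := mem_filter.mp hv
        simp only [mem_coe, mem_insert, mem_singleton]
        omega
      · intro a ha b hb hab
        exact hrinj c a (mem_filter.mp ha).1 b (mem_filter.mp hb).1 hab
    refine this.trans ?_
    refine (card_insert_le _ _).trans ?_
    simp
  set H : Fin k → Finset (Sym2 V) :=
    fun i => C.biUnion (fun c => (T c ↑i).image (fun v => s(c, v))) with hH
  have hmemH : ∀ (i : Fin k) (e : Sym2 V),
      e ∈ H i ↔ ∃ c ∈ C, ∃ v ∈ T c ↑i, s(c, v) = e := by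
    intro i e
    simp [hH, mem_biUnion, mem_image]
  -- edges incident to a center
  have hcenter : ∀ x ∈ C, ∀ i : Fin k,
      (H i).filter (fun e => x ∈ e) ⊆ (T x ↑i).image (fun v => s(x, v)) := by
    intro x hx i e he
    obtain ⟨heH, hxe⟩ := mem_filter.mp he
    obtain ⟨c, hc, v, hv, rfl⟩ := (hmemH i e).mp heH
    have hvℓ : v ∈ ℓ c := (mem_filter.mp hv).1
    rcases Sym2.mem_iff.mp hxe with rfl | rfl
    · exact mem_image.mpr ⟨v, hv, rfl⟩
    · exact absurd hx (F4 c hc x hvℓ)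
  -- edges incident to a leaf
  have hleaf : ∀ c₀ ∈ C, ∀ x ∈ ℓ c₀, ∀ i : Fin k,
      (H i).filter (fun e => x ∈ e) ⊆ {s(c₀, x)} := by
    intro c₀ hc₀ x hx i e he
    obtain ⟨heH, hxe⟩ := mem_filter.mp he
    obtain ⟨c, hc, v, hv, rfl⟩ := (hmemH i e).mp heH
    have hvℓ : v ∈ ℓ c := (mem_filter.mp hv).1
    rcases Sym2.mem_iff.mp hxe with rfl | rfl
    · exact absurd hc (F4 c₀ hc₀ x hx)
    · have hcc₀ : c = c₀ := by
        by_contra hne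
        exact F5 c hc c₀ hc₀ hne x hvℓ hx
      rw [hcc₀, mem_singleton]
  -- edges incident to an uncovered-by-stars vertex: none (not needed if covering is total)
  have hnone : ∀ x, x ∉ C → (∀ c ∈ C, x ∉ ℓ c) → ∀ i : Fin k,
      (H i).filter (fun e => x ∈ e) = ∅ := by
    intro x hxC hxℓ i
    rw [eq_empty_iff_forall_notMem]
    intro e he
    obtain ⟨heH, hxe⟩ := mem_filter.mp he
    obtain ⟨c, hc, v, hv, rfl⟩ := (hmemH i e).mp heH
    have hvℓ : v ∈ ℓ c := (mem_filter.mp hv).1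
    rcases Sym2.mem_iff.mp hxe with rfl | rfl
    · exact hxC hc
    · exact hxℓ c hc hvℓ
  have hdeg : ∀ (i : Fin k) (x : V), degF (H i) x ≤ 2 := by
    intro i x
    by_cases hxC : x ∈ C
    · calc degF (H i) x ≤ ((T x ↑i).image (fun v => s(x, v))).card :=
          card_le_card (hcenter x hxC i)
        _ ≤ (T x ↑i).card := card_image_le
        _ ≤ 2 := hT2 x ↑i
    · by_cases hxc₀ : ∃ c₀ ∈ C, x ∈ ℓ c₀
      · obtain ⟨c₀, hc₀, hx⟩ := hxc₀
        calc degF (H i) x ≤ ({s(c₀, x)} : Finset (Sym2 V)).card :=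
            card_le_card (hleaf c₀ hc₀ x hx i)
          _ ≤ 2 := by simp
      · push_neg at hxc₀
        unfold degF
        rw [hnone x hxC hxc₀ i]
        simp
  have hdegleaf : ∀ (i : Fin k), ∀ c₀ ∈ C, ∀ x ∈ ℓ c₀, s(c₀, x) ∈ H i → degF (H i) x = 1 := by
    intro i c₀ hc₀ x hx hmem
    have h1 : (H i).filter (fun e => x ∈ e) = {s(c₀, x)} := by
      apply Finset.Subset.antisymm (hleaf c₀ hc₀ x hx i)
      intro e he
      rw [mem_singleton] at he
      subst he
      exact mem_filter.mpr ⟨hmem, by simp⟩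
    unfold degF
    rw [h1, card_singleton]
  refine ⟨H, fun i => ⟨?_, hdeg i, ?_⟩, ?_⟩
  · -- edges of G
    intro e he
    obtain ⟨c, hc, v, hv, rfl⟩ := (hmemH i e).mp he
    exact (F3 c hc v (mem_filter.mp hv).1)
  · -- each edge has an endpoint of degree one
    intro e he u v huv
    obtain ⟨c, hc, w, hw, hcw⟩ := (hmemH i e).mp he
    have hwℓ : w ∈ ℓ c := (mem_filter.mp hw).1
    have hdw : degF (H i) w = 1 := hdegleaf i c hc w hwℓ (hcw ▸ he)
    rw [huv] at hcw
    rcases Sym2.eq_iff.mp hcw with ⟨h1, h2⟩ | ⟨h1, h2⟩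
    · exact Or.inr (by rw [← h2]; exact hdw)
    · exact Or.inl (by rw [← h2]; exact hdw)
  · -- covering
    intro v
    rcases F6 v with hvC | ⟨c, hc, hv⟩
    · obtain ⟨x, hx⟩ := F1 v hvC
      have hrx : r v x < 2 * k := (hrlt v x hx).trans_le (F2 v hvC)
      have hik : r v x / 2 < k := by omega
      refine ⟨⟨r v x / 2, hik⟩, s(v, x), ?_, by simp⟩
      exact (hmemH _ _).mpr ⟨v, hvC, x, mem_filter.mpr ⟨hx, rfl⟩, rfl⟩
    · have hrv : r c v < 2 * k := (hrlt c v hv).trans_le (F2 c hc)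
      have hik : r c v / 2 < k := by omega
      refine ⟨⟨r c v / 2, hik⟩, s(c, v), ?_, by simp⟩
      exact (hmemH _ _).mpr ⟨c, hc, v, mem_filter.mpr ⟨hv, rfl⟩, rfl⟩


section withG
variable {V : Type*} [Fintype V] [DecidableEq V] (G : SimpleGraph V) [DecidableRel G.Adj]

private theorem exists_fn {d : ℕ} (hd : 1 ≤ d)
    (hstab : ∀ S : Finset V, IsStable G S → S.card ≤ d * (nbr G S).card) :
    ∃ f : V → V, (∀ v, G.Adj v (f v)) ∧
      ∀ w : V, (univ.filter (fun v => f v = w)).card ≤ d := by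
  classical
  set t : V → Finset (V × Fin d) := fun v => (G.neighborFinset v) ×ˢ univ with ht
  have hall : ∀ A : Finset V, A.card ≤ (A.biUnion t).card := by
    intro A
    have hbi : A.biUnion t = (A.biUnion (fun u => G.neighborFinset u)) ×ˢ (univ : Finset (Fin d)) := by
      ext ⟨w, j⟩
      simp [ht, Finset.mem_biUnion, Finset.mem_product]
    rw [hbi, Finset.card_product, Finset.card_univ, Fintype.card_fin]
    set N' := A.biUnion (fun u => G.neighborFinset u) with hN'
    set A₀ := A \ N' with hA₀
    have hstable : IsStable G A₀ := by
      intro u hu v hv hadj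
      have : v ∈ N' := by
        rw [hN']
        exact Finset.mem_biUnion.mpr ⟨u, (Finset.mem_sdiff.mp hu).1, by
          simpa [SimpleGraph.mem_neighborFinset] using hadj⟩
      exact (Finset.mem_sdiff.mp hv).2 this
    have hsub : nbr G A₀ ⊆ N' \ A := by
      intro w hw
      simp only [nbr, mem_filter, mem_univ, true_and] at hw
      obtain ⟨hwA₀, u, hu, hadj⟩ := hw
      have huA : u ∈ A := (Finset.mem_sdiff.mp hu).1
      have hwN' : w ∈ N' := Finset.mem_biUnion.mpr ⟨u, huA, by
        simpa [SimpleGraph.mem_neighborFinset] using hadj⟩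
      refine Finset.mem_sdiff.mpr ⟨hwN', fun hwA => ?_⟩
      have : u ∈ N' := Finset.mem_biUnion.mpr ⟨w, hwA, by
        simpa [SimpleGraph.mem_neighborFinset] using hadj.symm⟩
      exact (Finset.mem_sdiff.mp hu).2 this
    have h1 : A₀.card ≤ d * (N' \ A).card :=
      (hstab A₀ hstable).trans (Nat.mul_le_mul_left d (Finset.card_le_card hsub))
    have h2 : (A ∩ N').card ≤ d * (N' ∩ A).card := by
      rw [Finset.inter_comm]
      exact Nat.le_mul_of_pos_left _ hd
    have hsplit : A.card = A₀.card + (A ∩ N').card := by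
      rw [hA₀]
      exact (Finset.card_sdiff_add_card_inter A N').symm
    have hsplit2 : (N' \ A).card + (N' ∩ A).card = N'.card :=
      Finset.card_sdiff_add_card_inter N' A
    calc A.card = A₀.card + (A ∩ N').card := hsplit
      _ ≤ d * (N' \ A).card + d * (N' ∩ A).card := Nat.add_le_add h1 h2
      _ = d * ((N' \ A).card + (N' ∩ A).card) := (Nat.mul_add _ _ _).symm
      _ = d * N'.card := by rw [hsplit2]
      _ = N'.card * d := Nat.mul_comm _ _
  obtain ⟨F, hFinj, hFt⟩ := (Finset.all_card_le_biUnion_card_iff_exists_injective t).mp hall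
  refine ⟨fun v => (F v).1, fun v => ?_, fun w => ?_⟩
  · have := hFt v
    rw [ht] at this
    simpa [SimpleGraph.mem_neighborFinset] using (Finset.mem_product.mp this).1
  · have : ((univ.filter (fun v => (F v).1 = w))).card ≤ (univ : Finset (Fin d)).card := by
      apply Finset.card_le_card_of_injOn (fun v => (F v).2) (fun _ _ => Finset.mem_univ _)
      intro a ha b hb hab
      simp only [mem_coe, mem_filter] at ha hb
      apply hFinj
      exact Prod.ext (ha.2.trans hb.2.symm) hab
    simpa using this


private theorem fwd {k : ℕ} (H : Fin k → Finset (Sym2 V))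
    (hP : ∀ i, Is2StarPacking G (H i)) (hcov : ∀ v : V, ∃ i, Covers (H i) v)
    (S : Finset V) (hS : IsStable G S) : S.card ≤ 2 * k * (nbr G S).card := by
  classical
  have key : ∀ s : V, ∃ p : Fin k × V, s ∈ S → p.2 ∈ nbr G S ∧ s(s, p.2) ∈ H p.1 := by
    intro s
    obtain ⟨i, e, heH, hse⟩ := hcov s
    obtain ⟨w, rfl⟩ := Sym2.mem_iff_exists.mp hse
    have hadj : G.Adj s w := (hP i).1 heH
    refine ⟨(i, w), fun hs => ⟨?_, heH⟩⟩
    simp only [nbr, mem_filter, mem_univ, true_and]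
    exact ⟨fun hwS => hS s hs w hwS hadj, s, hs, hadj⟩
  choose F hF using key
  have hF1 : ∀ s ∈ S, (F s).2 ∈ nbr G S := fun s hs => (hF s hs).1
  have hF2 : ∀ s ∈ S, s(s, (F s).2) ∈ H (F s).1 := fun s hs => (hF s hs).2
  have maps : ∀ s ∈ S, F s ∈ (univ : Finset (Fin k)) ×ˢ nbr G S := by
    intro s hs
    simp only [Finset.mem_product, Finset.mem_univ, true_and]
    exact hF1 s hs
  have := Finset.card_le_mul_card_image_of_maps_to maps 2 ?_
  · calc S.card ≤ 2 * ((univ : Finset (Fin k)) ×ˢ nbr G S).card := this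
      _ = 2 * k * (nbr G S).card := by
        simp [Finset.card_product, mul_assoc]
  · rintro ⟨i, w⟩ hb
    -- fiber {s ∈ S | F s = (i,w)} injects into edges at w in H i
    have hinj : ∀ s ∈ S.filter (fun x => F x = (i, w)), s(s, w) ∈ (H i).filter (fun e => w ∈ e) := by
      intro s hs
      simp only [mem_filter] at hs
      obtain ⟨hsS, hfe⟩ := hs
      have h2 := hF2 s hsS
      rw [hfe] at h2
      simp only [mem_filter]
      exact ⟨h2, by simp [Sym2.mem_iff]⟩
    have hcard : (S.filter (fun x => F x = (i, w))).card ≤ ((H i).filter (fun e => w ∈ e)).card := by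
      apply Finset.card_le_card_of_injOn (fun s => s(s, w)) hinj
      intro a ha b hb hab
      rcases Sym2.eq_iff.mp hab with ⟨h1, _⟩ | ⟨h1, h2⟩
      · exact h1
      · exact h1.trans h2
    exact hcard.trans ((hP i).2.1 w)


end withG

end StarPackingProof

theorem stmt_16 {V : Type*} [Fintype V] [DecidableEq V] (G : SimpleGraph V) [DecidableRel G.Adj]
    (k : ℕ) (hk : 1 ≤ k) :
    (∃ H : Fin k → Finset (Sym2 V),
        (∀ i, Is2StarPacking G (H i)) ∧ ∀ v : V, ∃ i, Covers (H i) v) ↔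
      ∀ S : Finset V, IsStable G S → S.card ≤ 2 * k * (nbr G S).card := by
  classical
  constructor
  · rintro ⟨H, hP, hcov⟩ S hS
    exact fwd G H hP hcov S hS
  · intro hstab
    have hd1 : 1 ≤ 2 * k := by omega
    obtain ⟨f, hadjf, hfib⟩ := exists_fn G hd1 hstab
    obtain ⟨C, ℓ, hsf⟩ := exists_star_forest (G := G) (f := f) hadjf (by omega) hfib
    exact packing_of_star_forest hsf
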